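/- Let x = a → b be a type and M : x. Then M is Hs-preserving (i.e. M ∈ Hs(x)) if and only if M is completely Hs-preserving, meaning that (M ⊛ id_{L(z)})(ρ) ∈ Hs(b ⊛ z) for every type z with ord(z → z) = ord(x) and every ρ ∈ Hs(a ⊛ z). -/

import Mathlib

inductive Ty (Λ : Type) : Type
  | elem : List Λ → Ty Λ
  | arrow : Ty Λ → Ty Λ → Ty Λ

namespace Ty

variable {Λ : Type}

def ord : Ty Λ → ℕ
  | elem _ => 0
  | arrow a b => 1 + max a.ord b.ord

def par : Ty Λ → Ty Λ → Ty Λ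
  | elem v, elem w => elem (v ++ w)
  | elem v, arrow c d => arrow c (par (elem v) d)
  | arrow a b, elem w => arrow a (par b (elem w))
  | arrow a b, arrow c d =>
    if (arrow a b).ord < (arrow c d).ord then arrow c (par (arrow a b) d)
    else if (arrow a b).ord = (arrow c d).ord then arrow (par a c) (par b d)
    else arrow a (par b (arrow c d))

theorem ord_par (x y : Ty Λ) : (x.par y).ord = max x.ord y.ord := by
  induction x, y using par.induct with
  | case1 v w => simp [par, ord]
  | case2 v c d ih => simp_all [par, ord]
  | case3 a b w ih => simp_all [par, ord]
  | case4 a b c d h ih => rw [par, if_pos h]; simp_all [ord]; omega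
  | case5 a b c d h1 h2 ih1 ih2 => rw [par, if_neg h1, if_pos h2]; simp_all [ord]; omega
  | case6 a b c d h1 h2 ih => rw [par, if_neg h1, if_neg h2]; simp_all [ord]; omega

theorem par_elem_elem (v w : List Λ) : (elem v).par (elem w) = elem (v ++ w) := by
  rw [par]

theorem par_arrow_arrow {a b c d : Ty Λ} (h : (arrow a b).ord = (arrow c d).ord) :
    (arrow a b).par (arrow c d) = arrow (a.par c) (b.par d) := by
  rw [par, if_neg (by omega), if_pos h]

theorem par_lt {x c d : Ty Λ} (h : x.ord < (arrow c d).ord) :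
    x.par (arrow c d) = arrow c (x.par d) := by
  cases x with
  | elem v => rw [par]
  | arrow a b => rw [par, if_pos h]

theorem par_gt {a b y : Ty Λ} (h : y.ord < (arrow a b).ord) :
    (arrow a b).par y = arrow a (b.par y) := by
  cases y with
  | elem w => rw [par]
  | arrow c d => rw [par, if_neg (by omega), if_neg (by omega)]

end Ty
namespace HigherOrder

open scoped TensorProduct ComplexOrder

variable {Λ : Type} (dm : Λ → ℕ)

def dimw (w : List Λ) : ℕ := (w.map dm).prod

theorem dimw_append (v w : List Λ) : dimw dm (v ++ w) = dimw dm v * dimw dm w := by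
  simp [dimw]

noncomputable def L : Ty Λ → ModuleCat ℂ
  | .elem w => ModuleCat.of ℂ (Matrix (Fin (dimw dm w)) (Fin (dimw dm w)) ℂ)
  | .arrow a b => ModuleCat.of ℂ (↑(L a) →ₗ[ℂ] ↑(L b))

def toHom {a b : Ty Λ} (M : ↑(L dm (Ty.arrow a b))) : ↑(L dm a) →ₗ[ℂ] ↑(L dm b) := M

def ofHom {a b : Ty Λ} (f : ↑(L dm a) →ₗ[ℂ] ↑(L dm b)) : ↑(L dm (Ty.arrow a b)) := f

def toMat {w : List Λ} (A : ↑(L dm (Ty.elem w))) :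
    Matrix (Fin (dimw dm w)) (Fin (dimw dm w)) ℂ := A

def ofMat {w : List Λ} (A : Matrix (Fin (dimw dm w)) (Fin (dimw dm w)) ℂ) :
    ↑(L dm (Ty.elem w)) := A

noncomputable def app {a b : Ty Λ} (M : ↑(L dm (Ty.arrow a b))) (ρ : ↑(L dm a)) : ↑(L dm b) :=
  toHom dm M ρ

instance instFinDimL (x : Ty Λ) : FiniteDimensional ℂ ↑(L dm x) := by
  induction x with
  | elem w => exact inferInstanceAs (FiniteDimensional ℂ (Matrix _ _ ℂ))
  | arrow a b iha ihb => exact inferInstanceAs (FiniteDimensional ℂ (↑(L dm a) →ₗ[ℂ] ↑(L dm b)))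

noncomputable def castL {x y : Ty Λ} (h : x = y) : ↑(L dm x) ≃ₗ[ℂ] ↑(L dm y) :=
  h ▸ LinearEquiv.refl ℂ ↑(L dm x)

/-- `L (arrow a b)` is (by definition) a space of linear maps. -/
noncomputable def homEquivL (a b : Ty Λ) :
    ↑(L dm (Ty.arrow a b)) ≃ₗ[ℂ] (↑(L dm a) →ₗ[ℂ] ↑(L dm b)) :=
  { toFun := toHom dm, invFun := ofHom dm, map_add' := fun _ _ => rfl,
    map_smul' := fun _ _ => rfl, left_inv := fun _ => rfl, right_inv := fun _ => rfl }

/-- `L (elem w)` is (by definition) a space of matrices. -/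
noncomputable def matEquivL (w : List Λ) :
    ↑(L dm (Ty.elem w)) ≃ₗ[ℂ] Matrix (Fin (dimw dm w)) (Fin (dimw dm w)) ℂ :=
  { toFun := toMat dm, invFun := ofMat dm, map_add' := fun _ _ => rfl,
    map_smul' := fun _ _ => rfl, left_inv := fun _ => rfl, right_inv := fun _ => rfl }

/-- The parallel product on the level of spaces: the canonical identification of
`L x ⊗ L y` with `L (x ⊛ y)`. -/
noncomputable def parEquiv : (x y : Ty Λ) →
    (↑(L dm x) ⊗[ℂ] ↑(L dm y)) ≃ₗ[ℂ] ↑(L dm (x.par y))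
  | .elem v, .elem w =>
      (TensorProduct.congr (matEquivL dm v) (matEquivL dm w)) ≪≫ₗ
      ((Matrix.stdBasis ℂ (Fin (dimw dm v)) (Fin (dimw dm v))).tensorProduct
          (Matrix.stdBasis ℂ (Fin (dimw dm w)) (Fin (dimw dm w)))).equiv
        (Matrix.stdBasis ℂ (Fin (dimw dm v) × Fin (dimw dm w))
          (Fin (dimw dm v) × Fin (dimw dm w)))
        (Equiv.prodProdProdComm _ _ _ _) ≪≫ₗ
      Matrix.reindexLinearEquiv ℂ ℂ finProdFinEquiv finProdFinEquiv ≪≫ₗ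
      Matrix.reindexLinearEquiv ℂ ℂ (finCongr (dimw_append dm v w).symm)
        (finCongr (dimw_append dm v w).symm) ≪≫ₗ
      (matEquivL dm (v ++ w)).symm ≪≫ₗ
      castL dm (Ty.par_elem_elem v w).symm
  | .elem v, .arrow c d =>
      (TensorProduct.congr (LinearEquiv.refl ℂ _) (homEquivL dm c d)) ≪≫ₗ
      lTensorHomEquivHomLTensor ℂ ↑(L dm c) ↑(L dm (Ty.elem v)) ↑(L dm d) ≪≫ₗ
      LinearEquiv.arrowCongr (LinearEquiv.refl ℂ _) (parEquiv (Ty.elem v) d) ≪≫ₗ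
      (homEquivL dm c ((Ty.elem v).par d)).symm ≪≫ₗ
      castL dm (Ty.par_lt (by simp [Ty.ord])).symm
  | .arrow a b, .elem w =>
      (TensorProduct.congr (homEquivL dm a b) (LinearEquiv.refl ℂ _)) ≪≫ₗ
      rTensorHomEquivHomRTensor ℂ ↑(L dm a) ↑(L dm b) ↑(L dm (Ty.elem w)) ≪≫ₗ
      LinearEquiv.arrowCongr (LinearEquiv.refl ℂ _) (parEquiv b (Ty.elem w)) ≪≫ₗ
      (homEquivL dm a (b.par (Ty.elem w))).symm ≪≫ₗ
      castL dm (Ty.par_gt (by simp [Ty.ord])).symm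
  | .arrow a b, .arrow c d =>
      if h : (Ty.arrow a b).ord < (Ty.arrow c d).ord then
        (TensorProduct.congr (LinearEquiv.refl ℂ _) (homEquivL dm c d)) ≪≫ₗ
        lTensorHomEquivHomLTensor ℂ ↑(L dm c) ↑(L dm (Ty.arrow a b)) ↑(L dm d) ≪≫ₗ
        LinearEquiv.arrowCongr (LinearEquiv.refl ℂ _) (parEquiv (Ty.arrow a b) d) ≪≫ₗ
        (homEquivL dm c ((Ty.arrow a b).par d)).symm ≪≫ₗ
        castL dm (Ty.par_lt h).symm
      else if h2 : (Ty.arrow a b).ord = (Ty.arrow c d).ord then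
        (TensorProduct.congr (homEquivL dm a b) (homEquivL dm c d)) ≪≫ₗ
        homTensorHomEquiv ℂ ↑(L dm a) ↑(L dm c) ↑(L dm b) ↑(L dm d) ≪≫ₗ
        LinearEquiv.arrowCongr (parEquiv a c) (parEquiv b d) ≪≫ₗ
        (homEquivL dm (a.par c) (b.par d)).symm ≪≫ₗ
        castL dm (Ty.par_arrow_arrow h2).symm
      else
        (TensorProduct.congr (homEquivL dm a b) (LinearEquiv.refl ℂ _)) ≪≫ₗ
        rTensorHomEquivHomRTensor ℂ ↑(L dm a) ↑(L dm b) ↑(L dm (Ty.arrow c d)) ≪≫ₗ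
        LinearEquiv.arrowCongr (LinearEquiv.refl ℂ _) (parEquiv b (Ty.arrow c d)) ≪≫ₗ
        (homEquivL dm a (b.par (Ty.arrow c d))).symm ≪≫ₗ
        castL dm (Ty.par_gt (by omega)).symm

/-- The parallel product of higher-order maps. -/
noncomputable def parMap {x y : Ty Λ} (M : ↑(L dm x)) (N : ↑(L dm y)) : ↑(L dm (x.par y)) :=
  parEquiv dm x y (M ⊗ₜ[ℂ] N)

/-- The identity map, as an element of `L (z → z)`. -/
noncomputable def idL (z : Ty Λ) : ↑(L dm (Ty.arrow z z)) :=
  ofHom dm (LinearMap.id)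

/-- The family of sets of Hermitian / Hs-preserving maps. -/
noncomputable def Hs : (x : Ty Λ) → Set ↑(L dm x)
  | .elem w => {A | (toMat dm A).IsHermitian}
  | .arrow a b => {M | ∀ ρ ∈ Hs a, app dm M ρ ∈ Hs b}

/-- The family of cones of positive semidefinite / completely K-preserving maps. -/
noncomputable def K : (x : Ty Λ) → Set ↑(L dm x)
  | .elem _ => {A | (toMat dm A).PosSemidef}
  | .arrow a b => {M | ∀ z : Ty Λ, ∀ hz : (Ty.arrow z z).ord = (Ty.arrow a b).ord,
      ∀ ρ ∈ K (a.par z),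
        app dm (castL dm (Ty.par_arrow_arrow hz.symm) (parMap dm M (idL dm z))) ρ ∈ K (b.par z)}
  termination_by x => x.ord
  decreasing_by
  all_goals (simp only [Ty.ord_par, Ty.ord] at hz ⊢; omega)

end HigherOrder

section Aux

namespace HigherOrder

open scoped TensorProduct
open Matrix

variable {Λ : Type} (dm : Λ → ℕ)

theorem castL_castL {x y : Ty Λ} (h : x = y) (v : ↑(L dm y)) :
    castL dm h (castL dm h.symm v) = v := by subst h; rfl

theorem hom_ext {a b : Ty Λ} {M N : ↑(L dm (Ty.arrow a b))}
    (h : ∀ ρ, app dm M ρ = app dm N ρ) : M = N :=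
  LinearMap.ext h

theorem app_add {a b : Ty Λ} (M : ↑(L dm (Ty.arrow a b))) (u v : ↑(L dm a)) :
    app dm M (u + v) = app dm M u + app dm M v := map_add (toHom dm M) u v

theorem app_smul {a b : Ty Λ} (M : ↑(L dm (Ty.arrow a b))) (z : ℂ) (u : ↑(L dm a)) :
    app dm M (z • u) = z • app dm M u := map_smul (toHom dm M) z u

theorem app_zero {a b : Ty Λ} (M : ↑(L dm (Ty.arrow a b))) :
    app dm M 0 = 0 := map_zero (toHom dm M)

theorem app_sub {a b : Ty Λ} (M : ↑(L dm (Ty.arrow a b))) (u v : ↑(L dm a)) :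
    app dm M (u - v) = app dm M u - app dm M v := map_sub (toHom dm M) u v

theorem app_idL {z : Ty Λ} (ρ : ↑(L dm z)) : app dm (idL dm z) ρ = ρ := rfl

set_option maxHeartbeats 1000000 in
/-- The conjugation (star) operation on each level, together with its basic properties. -/
noncomputable def cstarAux : (x : Ty Λ) →
    { f : ↑(L dm x) → ↑(L dm x) //
      (∀ u v, f (u + v) = f u + f v) ∧
      (∀ (z : ℂ) v, f (z • v) = (starRingEnd ℂ) z • f v) ∧
      (∀ v, f (f v) = v) }
  | .elem w =>
    ⟨fun A => ofMat dm (toMat dm A)ᴴ,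
      fun u v => Matrix.conjTranspose_add _ _,
      fun z v => Matrix.conjTranspose_smul z (toMat dm v),
      fun v => Matrix.conjTranspose_conjTranspose _⟩
  | .arrow a b =>
    ⟨fun M => ofHom dm
      { toFun := fun ρ => (cstarAux b).1 (toHom dm M ((cstarAux a).1 ρ))
        map_add' := by
          intro ρ σ
          beta_reduce
          rw [(cstarAux a).2.1, map_add, (cstarAux b).2.1]
        map_smul' := by
          intro z ρ
          simp only [RingHom.id_apply]
          beta_reduce
          rw [(cstarAux a).2.2.1, _root_.map_smul, (cstarAux b).2.2.1, Complex.conj_conj] },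
      by
        intro u v
        refine LinearMap.ext fun ρ => ?_
        show (cstarAux b).1 ((toHom dm u) ((cstarAux a).1 ρ)
              + (toHom dm v) ((cstarAux a).1 ρ))
            = (cstarAux b).1 ((toHom dm u) ((cstarAux a).1 ρ))
              + (cstarAux b).1 ((toHom dm v) ((cstarAux a).1 ρ))
        rw [(cstarAux b).2.1],
      by
        intro z v
        refine LinearMap.ext fun ρ => ?_
        show (cstarAux b).1 (z • (toHom dm v) ((cstarAux a).1 ρ))
            = (starRingEnd ℂ) z • (cstarAux b).1 ((toHom dm v) ((cstarAux a).1 ρ))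
        exact (cstarAux b).2.2.1 z _,
      by
        intro v
        refine LinearMap.ext fun ρ => ?_
        show (cstarAux b).1 ((cstarAux b).1
              ((toHom dm v) ((cstarAux a).1 ((cstarAux a).1 ρ)))) = (toHom dm v) ρ
        rw [(cstarAux a).2.2.2, (cstarAux b).2.2.2]⟩

/-- The conjugation operation. -/
noncomputable def cstar {x : Ty Λ} (v : ↑(L dm x)) : ↑(L dm x) := (cstarAux dm x).1 v

theorem cstar_add {x : Ty Λ} (u v : ↑(L dm x)) :
    cstar dm (u + v) = cstar dm u + cstar dm v := (cstarAux dm x).2.1 u v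

theorem cstar_smul {x : Ty Λ} (z : ℂ) (v : ↑(L dm x)) :
    cstar dm (z • v) = (starRingEnd ℂ) z • cstar dm v := (cstarAux dm x).2.2.1 z v

theorem cstar_cstar {x : Ty Λ} (v : ↑(L dm x)) : cstar dm (cstar dm v) = v :=
  (cstarAux dm x).2.2.2 v

theorem cstar_zero {x : Ty Λ} : cstar dm (0 : ↑(L dm x)) = 0 := by
  have := cstar_smul dm (0 : ℂ) (0 : ↑(L dm x))
  simpa using this

theorem cstar_neg {x : Ty Λ} (v : ↑(L dm x)) : cstar dm (-v) = -cstar dm v := by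
  have := cstar_smul dm (-1 : ℂ) v
  simpa using this

theorem cstar_sub {x : Ty Λ} (u v : ↑(L dm x)) :
    cstar dm (u - v) = cstar dm u - cstar dm v := by
  rw [sub_eq_add_neg, cstar_add, cstar_neg, sub_eq_add_neg]

theorem cstar_ofMat {w : List Λ} (A : Matrix (Fin (dimw dm w)) (Fin (dimw dm w)) ℂ) :
    cstar dm (ofMat dm A) = ofMat dm Aᴴ := by
  simp only [cstar, cstarAux]
  rfl

theorem cstar_app {a b : Ty Λ} (M : ↑(L dm (Ty.arrow a b))) (ρ : ↑(L dm a)) :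
    app dm (cstar dm M) ρ = cstar dm (app dm M (cstar dm ρ)) := by
  simp only [cstar, cstarAux, app, toHom, ofHom]
  rfl

theorem cstar_castL {x y : Ty Λ} (h : x = y) (v : ↑(L dm x)) :
    cstar dm (castL dm h v) = castL dm h (cstar dm v) := by subst h; rfl

theorem cstar_idL (z : Ty Λ) : cstar dm (idL dm z) = idL dm z := by
  apply hom_ext
  intro ρ
  rw [cstar_app, app_idL, app_idL, cstar_cstar]

/-- Hermitian decomposition. -/
theorem exists_herm_decomp {x : Ty Λ} (v : ↑(L dm x)) :
    ∃ h k, cstar dm h = h ∧ cstar dm k = k ∧ v = h + Complex.I • k := by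
  refine ⟨(2⁻¹ : ℂ) • (v + cstar dm v), (-(2⁻¹) * Complex.I) • (v - cstar dm v), ?_, ?_, ?_⟩
  · rw [cstar_smul, cstar_add, cstar_cstar]
    simp only [map_inv₀, Complex.conj_ofNat]
    rw [add_comm]
  · rw [cstar_smul, cstar_sub, cstar_cstar]
    simp only [_root_.map_mul, map_neg, map_inv₀, Complex.conj_ofNat, Complex.conj_I]
    match_scalars <;> (ring_nf; try norm_num [Complex.I_sq])
  · match_scalars <;> (ring_nf; try norm_num [Complex.I_sq])

theorem parMap_add_left {x y : Ty Λ} (M M' : ↑(L dm x)) (N : ↑(L dm y)) :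
    parMap dm (M + M') N = parMap dm M N + parMap dm M' N := by
  unfold parMap
  rw [TensorProduct.add_tmul, map_add]

theorem parMap_add_right {x y : Ty Λ} (M : ↑(L dm x)) (N N' : ↑(L dm y)) :
    parMap dm M (N + N') = parMap dm M N + parMap dm M N' := by
  unfold parMap
  rw [TensorProduct.tmul_add, map_add]

theorem parMap_smul_left {x y : Ty Λ} (z : ℂ) (M : ↑(L dm x)) (N : ↑(L dm y)) :
    parMap dm (z • M) N = z • parMap dm M N := by
  unfold parMap
  rw [show (z • M) ⊗ₜ[ℂ] N = z • (M ⊗ₜ[ℂ] N) from (TensorProduct.smul_tmul' z M N).symm,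
    _root_.map_smul]

theorem parMap_smul_right {x y : Ty Λ} (z : ℂ) (M : ↑(L dm x)) (N : ↑(L dm y)) :
    parMap dm M (z • N) = z • parMap dm M N := by
  unfold parMap
  rw [TensorProduct.tmul_smul, _root_.map_smul]

theorem parMap_sub_left {x y : Ty Λ} (M M' : ↑(L dm x)) (N : ↑(L dm y)) :
    parMap dm (M - M') N = parMap dm M N - parMap dm M' N := by
  unfold parMap
  rw [TensorProduct.sub_tmul, map_sub]

/-- Unfolding `parMap` in the equal-order arrow case. -/
theorem app_parMap_eq {a b c d : Ty Λ} (h : (Ty.arrow a b).ord = (Ty.arrow c d).ord)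
    (M : ↑(L dm (Ty.arrow a b))) (N : ↑(L dm (Ty.arrow c d)))
    (ρ : ↑(L dm a)) (σ : ↑(L dm c)) :
    app dm (castL dm (Ty.par_arrow_arrow h) (parMap dm M N)) (parMap dm ρ σ)
      = parMap dm (app dm M ρ) (app dm N σ) := by
  unfold parMap
  simp only [parEquiv]
  rw [dif_neg (lt_irrefl _ ∘ (h ▸ ·)), dif_pos h]
  simp only [LinearEquiv.trans_apply, TensorProduct.congr_tmul, homTensorHomEquiv_apply,
    castL_castL]
  simp only [app, toHom, ofHom, homEquivL, LinearEquiv.coe_symm_mk,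
    LinearEquiv.arrowCongr_apply, LinearEquiv.symm_apply_apply, TensorProduct.homTensorHomMap_apply,
    TensorProduct.map_tmul]
  show (parEquiv dm b d) (TensorProduct.map (toHom dm M) (toHom dm N)
    ((parEquiv dm a c).symm ((parEquiv dm a c) (ρ ⊗ₜ[ℂ] σ)))) = _
  rw [LinearEquiv.symm_apply_apply, TensorProduct.map_tmul]
  rfl

/-- Unfolding `parMap` in the lower-order-left arrow case. -/
theorem app_parMap_lt {x c d : Ty Λ} (h : x.ord < (Ty.arrow c d).ord)
    (M : ↑(L dm x)) (N : ↑(L dm (Ty.arrow c d))) (ρ : ↑(L dm c)) :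
    app dm (castL dm (Ty.par_lt h) (parMap dm M N)) ρ = parMap dm M (app dm N ρ) := by
  unfold parMap
  cases x with
  | elem v =>
    simp only [parEquiv]
    simp only [LinearEquiv.trans_apply, TensorProduct.congr_tmul, LinearEquiv.refl_apply,
      lTensorHomEquivHomLTensor_apply, castL_castL]
    simp only [app, toHom, ofHom, homEquivL, LinearEquiv.coe_symm_mk,
      LinearEquiv.arrowCongr_apply, LinearEquiv.refl_symm, LinearEquiv.refl_apply,
      TensorProduct.lTensorHomToHomLTensor_apply]
    rfl
  | arrow a b =>
    simp only [parEquiv]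
    rw [dif_pos h]
    simp only [LinearEquiv.trans_apply, TensorProduct.congr_tmul, LinearEquiv.refl_apply,
      lTensorHomEquivHomLTensor_apply, castL_castL]
    simp only [app, toHom, ofHom, homEquivL, LinearEquiv.coe_symm_mk,
      LinearEquiv.arrowCongr_apply, LinearEquiv.refl_symm, LinearEquiv.refl_apply,
      TensorProduct.lTensorHomToHomLTensor_apply]
    rfl

/-- Unfolding `parMap` in the lower-order-right arrow case. -/
theorem app_parMap_gt {a b y : Ty Λ} (h : y.ord < (Ty.arrow a b).ord)
    (M : ↑(L dm (Ty.arrow a b))) (N : ↑(L dm y)) (ρ : ↑(L dm a)) :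
    app dm (castL dm (Ty.par_gt h) (parMap dm M N)) ρ = parMap dm (app dm M ρ) N := by
  unfold parMap
  cases y with
  | elem w =>
    simp only [parEquiv]
    simp only [LinearEquiv.trans_apply, TensorProduct.congr_tmul, LinearEquiv.refl_apply,
      rTensorHomEquivHomRTensor_apply, castL_castL]
    simp only [app, toHom, ofHom, homEquivL, LinearEquiv.coe_symm_mk,
      LinearEquiv.arrowCongr_apply, LinearEquiv.refl_symm, LinearEquiv.refl_apply,
      TensorProduct.rTensorHomToHomRTensor_apply]
    rfl
  | arrow c d =>
    simp only [parEquiv]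
    rw [dif_neg (by omega), dif_neg (by omega)]
    simp only [LinearEquiv.trans_apply, TensorProduct.congr_tmul, LinearEquiv.refl_apply,
      rTensorHomEquivHomRTensor_apply, castL_castL]
    simp only [app, toHom, ofHom, homEquivL, LinearEquiv.coe_symm_mk,
      LinearEquiv.arrowCongr_apply, LinearEquiv.refl_symm, LinearEquiv.refl_apply,
      TensorProduct.rTensorHomToHomRTensor_apply]
    rfl

theorem reindex_stdBasisMatrix {m n m' n' : Type*} [DecidableEq m] [DecidableEq n]
    [DecidableEq m'] [DecidableEq n'] (e : m ≃ m') (f : n ≃ n') (p : m) (q : n) :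
    Matrix.reindex e f (Matrix.single p q (1 : ℂ))
      = Matrix.single (e p) (f q) 1 := by
  ext i' j'
  simp only [Matrix.reindex_apply, Matrix.submatrix_apply, Matrix.single,
    Matrix.of_apply, Equiv.eq_symm_apply]

theorem stdBasisMatrix_conjT {m n : Type*} [DecidableEq m] [DecidableEq n] (p : m) (q : n) :
    (Matrix.single p q (1 : ℂ))ᴴ = Matrix.single q p 1 := by
  ext i j
  by_cases h1 : p = j <;> by_cases h2 : q = i <;>
    simp [Matrix.single, Matrix.conjTranspose_apply, h1, h2]

/-- The standard basis of `L (elem w)`. -/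
noncomputable def basisL (w : List Λ) :
    Module.Basis (Fin (dimw dm w) × Fin (dimw dm w)) ℂ ↑(L dm (Ty.elem w)) :=
  (Matrix.stdBasis ℂ _ _).map (matEquivL dm w).symm

theorem basisL_apply (w : List Λ) (i j : Fin (dimw dm w)) :
    basisL dm w (i, j) = ofMat dm (Matrix.single i j 1) := by
  rw [basisL, Module.Basis.map_apply, Matrix.stdBasis_eq_single]
  rfl

theorem parMap_elem_basis (v w : List Λ) (i j : Fin (dimw dm v)) (k l : Fin (dimw dm w)) :
    parMap dm (ofMat dm (Matrix.single i j 1)) (ofMat dm (Matrix.single k l 1))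
      = castL dm (Ty.par_elem_elem v w).symm
          (ofMat dm (Matrix.single
            (finCongr (dimw_append dm v w).symm (finProdFinEquiv (i, k)))
            (finCongr (dimw_append dm v w).symm (finProdFinEquiv (j, l))) 1)) := by
  unfold parMap
  simp only [parEquiv, LinearEquiv.trans_apply, TensorProduct.congr_tmul]
  rw [show (matEquivL dm v) (ofMat dm (Matrix.single i j 1))
        = Matrix.stdBasis ℂ _ _ (i, j) by rw [Matrix.stdBasis_eq_single]; rfl]
  rw [show (matEquivL dm w) (ofMat dm (Matrix.single k l 1))
        = Matrix.stdBasis ℂ _ _ (k, l) by rw [Matrix.stdBasis_eq_single]; rfl]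
  rw [← Module.Basis.tensorProduct_apply, Module.Basis.equiv_apply]
  simp only [Equiv.prodProdProdComm_apply, Matrix.stdBasis_eq_single,
    Matrix.reindexLinearEquiv_apply, reindex_stdBasisMatrix]
  rfl

theorem cstar_parMap (x y : Ty Λ) : ∀ (M : ↑(L dm x)) (N : ↑(L dm y)),
    cstar dm (parMap dm M N) = parMap dm (cstar dm M) (cstar dm N) := by
  induction x, y using Ty.par.induct with
  | case1 v w =>
    intro M N
    let F : ↑(L dm (Ty.elem v)) →ₗ[ℂ] ↑(L dm (Ty.elem w)) →ₗ[ℂ]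
        ↑(L dm ((Ty.elem v).par (Ty.elem w))) :=
      LinearMap.mk₂ ℂ (fun A B => cstar dm (parMap dm (cstar dm A) (cstar dm B)))
        (fun A A' B => by
          beta_reduce
          rw [cstar_add, parMap_add_left, cstar_add])
        (fun z A B => by
          beta_reduce
          rw [cstar_smul, parMap_smul_left, cstar_smul, Complex.conj_conj])
        (fun A B B' => by
          beta_reduce
          rw [cstar_add, parMap_add_right, cstar_add])
        (fun z A B => by
          beta_reduce
          rw [cstar_smul, parMap_smul_right, cstar_smul, Complex.conj_conj])
    let G : ↑(L dm (Ty.elem v)) →ₗ[ℂ] ↑(L dm (Ty.elem w)) →ₗ[ℂ]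
        ↑(L dm ((Ty.elem v).par (Ty.elem w))) :=
      LinearMap.mk₂ ℂ (fun A B => parMap dm A B)
        (fun A A' B => parMap_add_left dm A A' B)
        (fun z A B => parMap_smul_left dm z A B)
        (fun A B B' => parMap_add_right dm A B B')
        (fun z A B => parMap_smul_right dm z A B)
    have hFG : F = G := by
      refine Module.Basis.ext (basisL dm v) fun p => ?_
      refine Module.Basis.ext (basisL dm w) fun q => ?_
      obtain ⟨i, j⟩ := p
      obtain ⟨k, l⟩ := q
      show cstar dm (parMap dm (cstar dm (basisL dm v (i, j))) (cstar dm (basisL dm w (k, l))))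
        = parMap dm (basisL dm v (i, j)) (basisL dm w (k, l))
      rw [basisL_apply, basisL_apply, cstar_ofMat, cstar_ofMat, stdBasisMatrix_conjT,
        stdBasisMatrix_conjT, parMap_elem_basis, cstar_castL, cstar_ofMat,
        stdBasisMatrix_conjT, parMap_elem_basis]
    calc cstar dm (parMap dm M N)
        = F (cstar dm M) (cstar dm N) := by
          show cstar dm (parMap dm M N)
            = cstar dm (parMap dm (cstar dm (cstar dm M)) (cstar dm (cstar dm N)))
          rw [cstar_cstar, cstar_cstar]
      _ = G (cstar dm M) (cstar dm N) := by rw [hFG]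
      _ = parMap dm (cstar dm M) (cstar dm N) := rfl
  | case2 v c d ih =>
    intro M N
    have h : (Ty.elem v).ord < (Ty.arrow c d).ord := by simp only [Ty.ord]; omega
    apply (castL dm (Ty.par_lt h)).injective
    rw [← cstar_castL]
    apply hom_ext
    intro ρ
    rw [cstar_app, app_parMap_lt dm h, ih, ← cstar_app, app_parMap_lt dm h]
  | case3 a b w ih =>
    intro M N
    have h : (Ty.elem w).ord < (Ty.arrow a b).ord := by simp only [Ty.ord]; omega
    apply (castL dm (Ty.par_gt h)).injective
    rw [← cstar_castL]
    apply hom_ext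
    intro ρ
    rw [cstar_app, app_parMap_gt dm h, ih, ← cstar_app, app_parMap_gt dm h]
  | case4 a b c d h ih =>
    intro M N
    apply (castL dm (Ty.par_lt h)).injective
    rw [← cstar_castL]
    apply hom_ext
    intro ρ
    rw [cstar_app, app_parMap_lt dm h, ih, ← cstar_app, app_parMap_lt dm h]
  | case5 a b c d h1 h2 ih1 ih2 =>
    intro M N
    apply (castL dm (Ty.par_arrow_arrow h2)).injective
    rw [← cstar_castL]
    apply hom_ext
    intro τ
    suffices hs : ∀ t : ↑(L dm a) ⊗[ℂ] ↑(L dm c),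
        app dm (cstar dm (castL dm (Ty.par_arrow_arrow h2) (parMap dm M N)))
            (parEquiv dm a c t)
          = app dm (castL dm (Ty.par_arrow_arrow h2)
              (parMap dm (cstar dm M) (cstar dm N))) (parEquiv dm a c t) by
      have := hs ((parEquiv dm a c).symm τ)
      rwa [LinearEquiv.apply_symm_apply] at this
    intro t
    induction t using TensorProduct.induction_on with
    | zero =>
      rw [map_zero, cstar_app, cstar_zero, app_zero, cstar_zero, app_zero]
    | tmul ρ σ =>
      rw [show (parEquiv dm a c) (ρ ⊗ₜ[ℂ] σ) = parMap dm ρ σ from rfl]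
      rw [cstar_app, ih1, app_parMap_eq dm h2, ih2, ← cstar_app, ← cstar_app,
        app_parMap_eq dm h2]
    | add u u' hu hu' =>
      rw [map_add, app_add, app_add, hu, hu']
  | case6 a b c d h1 h2 ih =>
    intro M N
    have h : (Ty.arrow c d).ord < (Ty.arrow a b).ord := by omega
    apply (castL dm (Ty.par_gt h)).injective
    rw [← cstar_castL]
    apply hom_ext
    intro ρ
    rw [cstar_app, app_parMap_gt dm h, ih, ← cstar_app, app_parMap_gt dm h]

theorem Hs_eq_fixed : ∀ (x : Ty Λ), Hs dm x = {v | cstar dm v = v}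
  | .elem w => by
    ext A
    simp only [Hs, Set.mem_setOf_eq, cstar, cstarAux]
    exact Iff.rfl
  | .arrow a b => by
    ext M
    simp only [Hs, Set.mem_setOf_eq, Hs_eq_fixed a, Hs_eq_fixed b]
    constructor
    · intro hM
      apply hom_ext
      intro ρ
      obtain ⟨h, k, hh, hk, rfl⟩ := exists_herm_decomp dm ρ
      have e1 : cstar dm (app dm M h) = app dm M h := hM h hh
      have e2 : cstar dm (app dm M k) = app dm M k := hM k hk
      rw [cstar_app, cstar_add, cstar_smul, hh, hk, Complex.conj_I, neg_smul,
        ← sub_eq_add_neg, app_sub, app_smul, cstar_sub, cstar_smul, Complex.conj_I,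
        e1, e2, app_add, app_smul]
      module
    · intro hM ρ hρ
      calc cstar dm (app dm M ρ) = cstar dm (app dm (cstar dm M) ρ) := by rw [hM]
        _ = cstar dm (cstar dm (app dm M (cstar dm ρ))) := by rw [cstar_app]
        _ = app dm M (cstar dm ρ) := cstar_cstar dm _
        _ = app dm M ρ := by rw [hρ]

theorem mem_Hs_iff {x : Ty Λ} {v : ↑(L dm x)} : v ∈ Hs dm x ↔ cstar dm v = v := by
  rw [Hs_eq_fixed]
  exact Iff.rfl

theorem parMap_mem_Hs {x y : Ty Λ} {M : ↑(L dm x)} {N : ↑(L dm y)}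
    (hM : M ∈ Hs dm x) (hN : N ∈ Hs dm y) : parMap dm M N ∈ Hs dm (x.par y) := by
  rw [mem_Hs_iff] at hM hN ⊢
  rw [cstar_parMap, hM, hN]

/-- The Hermitian elements as a real subspace. -/
noncomputable def HsSub (x : Ty Λ) : Submodule ℝ ↑(L dm x) where
  carrier := Hs dm x
  add_mem' := by
    intro u v hu hv
    rw [mem_Hs_iff] at hu hv ⊢
    rw [cstar_add, hu, hv]
  zero_mem' := by
    rw [mem_Hs_iff]
    exact cstar_zero dm
  smul_mem' := by
    intro r v hv
    rw [mem_Hs_iff] at hv ⊢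
    rw [← Complex.coe_smul, cstar_smul, Complex.conj_ofReal, hv]

/-- The real span of parallel products of Hermitian elements. -/
noncomputable def parSpan (x y : Ty Λ) : Submodule ℝ ↑(L dm (x.par y)) :=
  Submodule.span ℝ (Set.image2 (parMap dm) (Hs dm x) (Hs dm y))

theorem parSpan_le (x y : Ty Λ) : parSpan dm x y ≤ HsSub dm (x.par y) :=
  Submodule.span_le.mpr (Set.image2_subset_iff.mpr fun _ hM _ hN =>
    parMap_mem_Hs dm hM hN)

theorem exists_decomp_par (x y : Ty Λ) (u : ↑(L dm (x.par y))) :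
    ∃ s ∈ parSpan dm x y, ∃ t ∈ parSpan dm x y, u = s + Complex.I • t := by
  suffices h : ∀ tt : ↑(L dm x) ⊗[ℂ] ↑(L dm y), ∃ s ∈ parSpan dm x y,
      ∃ t ∈ parSpan dm x y, parEquiv dm x y tt = s + Complex.I • t by
    have := h ((parEquiv dm x y).symm u)
    rwa [LinearEquiv.apply_symm_apply] at this
  intro tt
  induction tt using TensorProduct.induction_on with
  | zero => exact ⟨0, zero_mem _, 0, zero_mem _, by rw [map_zero, smul_zero, add_zero]⟩
  | tmul M N =>
    obtain ⟨h1, k1, hh1, hk1, rfl⟩ := exists_herm_decomp dm M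
    obtain ⟨h2, k2, hh2, hk2, rfl⟩ := exists_herm_decomp dm N
    have m11 : parMap dm h1 h2 ∈ parSpan dm x y :=
      Submodule.subset_span (Set.mem_image2_of_mem (mem_Hs_iff dm|>.mpr hh1)
        (mem_Hs_iff dm|>.mpr hh2))
    have m12 : parMap dm h1 k2 ∈ parSpan dm x y :=
      Submodule.subset_span (Set.mem_image2_of_mem (mem_Hs_iff dm|>.mpr hh1)
        (mem_Hs_iff dm|>.mpr hk2))
    have m21 : parMap dm k1 h2 ∈ parSpan dm x y :=
      Submodule.subset_span (Set.mem_image2_of_mem (mem_Hs_iff dm|>.mpr hk1)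
        (mem_Hs_iff dm|>.mpr hh2))
    have m22 : parMap dm k1 k2 ∈ parSpan dm x y :=
      Submodule.subset_span (Set.mem_image2_of_mem (mem_Hs_iff dm|>.mpr hk1)
        (mem_Hs_iff dm|>.mpr hk2))
    refine ⟨parMap dm h1 h2 - parMap dm k1 k2, sub_mem m11 m22,
      parMap dm h1 k2 + parMap dm k1 h2, add_mem m12 m21, ?_⟩
    rw [show parEquiv dm x y ((h1 + Complex.I • k1) ⊗ₜ[ℂ] (h2 + Complex.I • k2))
        = parMap dm (h1 + Complex.I • k1) (h2 + Complex.I • k2) from rfl]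
    simp only [parMap_add_left, parMap_add_right, parMap_smul_left, parMap_smul_right]
    match_scalars <;> (ring_nf; try norm_num [Complex.I_sq])
  | add u1 u2 h1 h2 =>
    obtain ⟨s1, hs1, t1, ht1, e1⟩ := h1
    obtain ⟨s2, hs2, t2, ht2, e2⟩ := h2
    exact ⟨s1 + s2, add_mem hs1 hs2, t1 + t2, add_mem ht1 ht2, by
      rw [map_add, e1, e2]; module⟩

theorem Hs_par_subset (x y : Ty Λ) {u : ↑(L dm (x.par y))} (hu : u ∈ Hs dm (x.par y)) :
    u ∈ parSpan dm x y := by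
  obtain ⟨s, hs, t, ht, rfl⟩ := exists_decomp_par dm x y u
  have hsH : cstar dm s = s := (mem_Hs_iff dm).mp (parSpan_le dm x y hs)
  have htH : cstar dm t = t := (mem_Hs_iff dm).mp (parSpan_le dm x y ht)
  rw [mem_Hs_iff, cstar_add, cstar_smul, hsH, htH, Complex.conj_I, neg_smul] at hu
  have h3 : -(Complex.I • t) = Complex.I • t := add_left_cancel hu
  have h4 : (2 * Complex.I) • t = 0 := by
    rw [two_mul, add_smul]
    nth_rewrite 1 [← h3]
    exact neg_add_cancel _
  have ht0 : t = 0 := by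
    have h5 := congrArg (fun w => (2 * Complex.I)⁻¹ • w) h4
    simpa [smul_smul, inv_mul_cancel₀ (mul_ne_zero two_ne_zero Complex.I_ne_zero)] using h5
  rw [ht0, smul_zero, add_zero]
  exact hs

/-- Witness types of each order. -/
def wit : ℕ → Ty Λ
  | 0 => Ty.elem []
  | n + 1 => Ty.arrow (wit n) (wit n)

theorem wit_ord (n : ℕ) : (wit (Λ := Λ) n).ord = n := by
  induction n with
  | zero => rfl
  | succ n ih => simp [wit, Ty.ord, ih, Nat.add_comm]

/-- A nonzero Hermitian element of each witness type. -/
noncomputable def witEl : (n : ℕ) → ↑(L dm (wit (Λ := Λ) n))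
  | 0 => ofMat dm 1
  | n + 1 => idL dm (wit n)

theorem witEl_mem : ∀ n : ℕ, witEl dm (Λ := Λ) n ∈ Hs dm (wit n)
  | 0 => by
    simp only [wit, witEl, Hs, Set.mem_setOf_eq]
    exact Matrix.isHermitian_one
  | n + 1 => by
    simp only [wit, witEl, Hs, Set.mem_setOf_eq]
    intro ρ hρ
    rwa [app_idL]

theorem witEl_ne : ∀ n : ℕ, witEl dm (Λ := Λ) n ≠ 0
  | 0 => by
    intro h
    have h0 : (0 : ℕ) < dimw dm [] := by simp [dimw]
    have h1 := congrFun (congrFun (congrArg (toMat dm) h) ⟨0, h0⟩) ⟨0, h0⟩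
    simp only [witEl] at h1
    rw [show toMat dm (ofMat dm (1 : Matrix (Fin (dimw dm [])) (Fin (dimw dm [])) ℂ)) = 1
      from rfl] at h1
    change (1 : Matrix (Fin (dimw dm [])) (Fin (dimw dm [])) ℂ) ⟨0, h0⟩ ⟨0, h0⟩
      = (0 : Matrix (Fin (dimw dm [])) (Fin (dimw dm [])) ℂ) ⟨0, h0⟩ ⟨0, h0⟩ at h1
    rw [Matrix.one_apply_eq] at h1
    exact one_ne_zero h1
  | n + 1 => by
    intro h
    apply witEl_ne n
    have := congrArg (fun F => app dm F (witEl dm n)) h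
    change app dm (idL dm (wit n)) (witEl dm n) = app dm 0 (witEl dm n) at this
    rw [app_idL] at this
    exact this.trans rfl

end HigherOrder

end Aux


open HigherOrder in
/-- A map `M : a → b` is Hs-preserving if and only if it is completely Hs-preserving. -/
theorem Hs_preserving_iff_completely {Λ : Type} (dm : Λ → ℕ) (a b : Ty Λ)
    (M : ↑(L dm (Ty.arrow a b))) :
    M ∈ Hs dm (Ty.arrow a b) ↔
      ∀ (z : Ty Λ) (hz : (Ty.arrow z z).ord = (Ty.arrow a b).ord),
        ∀ ρ ∈ Hs dm (a.par z),
          app dm (castL dm (Ty.par_arrow_arrow hz.symm) (parMap dm M (idL dm z))) ρ ∈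
            Hs dm (b.par z) := by

  constructor
  · intro hM z hz ρ hρ
    simp only [Hs, Set.mem_setOf_eq] at hM
    have hρS : ρ ∈ parSpan dm a z := Hs_par_subset dm a z hρ
    let Ψ : ↑(L dm (a.par z)) →ₗ[ℝ] ↑(L dm (b.par z)) :=
      (toHom dm (castL dm (Ty.par_arrow_arrow hz.symm)
        (parMap dm M (idL dm z)))).restrictScalars ℝ
    have himg : ∀ u ∈ Set.image2 (parMap dm) (Hs dm a) (Hs dm z),
        Ψ u ∈ HsSub dm (b.par z) := by
      rintro u ⟨σ, hσ, τ, hτ, rfl⟩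
      show app dm (castL dm (Ty.par_arrow_arrow hz.symm) (parMap dm M (idL dm z)))
        (parMap dm σ τ) ∈ Hs dm (b.par z)
      rw [app_parMap_eq dm hz.symm, app_idL]
      exact parMap_mem_Hs dm (hM σ hσ) hτ
    have hmem : Ψ ρ ∈ HsSub dm (b.par z) := by
      have h1 : Ψ ρ ∈ Submodule.map Ψ (parSpan dm a z) := Submodule.mem_map_of_mem hρS
      rw [parSpan, Submodule.map_span] at h1
      refine Submodule.span_le.mpr ?_ h1
      rintro u ⟨u', hu', rfl⟩
      exact himg u' hu'
    exact hmem
  · intro hcomp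
    simp only [Hs, Set.mem_setOf_eq]
    intro ρ hρ
    set n := max a.ord b.ord with hn
    have hz : (Ty.arrow (wit (Λ := Λ) n) (wit (Λ := Λ) n)).ord = (Ty.arrow a b).ord := by
      simp only [Ty.ord, wit_ord]
      omega
    have hρσ : parMap dm ρ (witEl dm n) ∈ Hs dm (a.par (wit n)) :=
      parMap_mem_Hs dm hρ (witEl_mem dm n)
    have hq := hcomp (wit n) hz (parMap dm ρ (witEl dm n)) hρσ
    rw [app_parMap_eq dm hz.symm, app_idL] at hq
    rw [mem_Hs_iff, cstar_parMap, (mem_Hs_iff dm).mp (witEl_mem dm n)] at hq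
    rw [mem_Hs_iff]
    have h0 : (cstar dm (app dm M ρ) - app dm M ρ) ⊗ₜ[ℂ] (witEl dm n) = 0 := by
      have h1 := congrArg (parEquiv dm b (wit n)).symm hq
      unfold parMap at h1
      rw [LinearEquiv.symm_apply_apply, LinearEquiv.symm_apply_apply] at h1
      rw [TensorProduct.sub_tmul, h1, sub_self]
    obtain ⟨φ, hφ⟩ : ∃ φ : Module.Dual ℂ ↑(L dm (wit (Λ := Λ) n)), φ (witEl dm n) ≠ 0 := by
      by_contra hc
      push_neg at hc
      exact witEl_ne dm n ((Module.forall_dual_apply_eq_zero_iff ℂ _).mp hc)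
    have h1 : φ (witEl dm n) • (cstar dm (app dm M ρ) - app dm M ρ) = 0 := by
      calc φ (witEl dm n) • (cstar dm (app dm M ρ) - app dm M ρ)
          = TensorProduct.rid ℂ ↑(L dm b) (TensorProduct.map LinearMap.id φ
              ((cstar dm (app dm M ρ) - app dm M ρ) ⊗ₜ[ℂ] (witEl dm n))) := by
            rw [TensorProduct.map_tmul, TensorProduct.rid_tmul, LinearMap.id_apply]
        _ = 0 := by rw [h0, map_zero, map_zero]
    have h2 : cstar dm (app dm M ρ) - app dm M ρ = 0 := by
      have h5 := congrArg (fun w => (φ (witEl dm n))⁻¹ • w) h1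
      simpa [smul_smul, inv_mul_cancel₀ hφ] using h5
    exact sub_eq_zero.mp h2
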